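/- Let K ⊆ ℝ^n be a closed, convex, unbounded set with non-empty interior. If the interior of K contains a point of ℤ^n, then int(K) ∩ ℤ^n is an infinite set. -/

import Mathlib

open Filter Metric Topology

/-- Pigeonhole / Dirichlet: some positive multiple of `v` is within `ε` of the
integer lattice in every coordinate. -/
lemma dirichlet_base {n : ℕ} (v : Fin n → ℝ) {ε : ℝ} (hε : 0 < ε) :
    ∃ m : ℕ, 1 ≤ m ∧ ∃ z : Fin n → ℤ, ∀ i, |(m : ℝ) * v i - z i| < ε := by
  obtain ⟨r, hr⟩ := exists_nat_gt (1 / ε)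
  have hr0 : (0 : ℝ) < r := lt_trans (by positivity) hr
  have hrn : 0 < r := by exact_mod_cast hr0
  have hrε : 1 / (r : ℝ) < ε := by
    rw [div_lt_iff₀ hr0]
    calc (1 : ℝ) = ε * (1 / ε) := by field_simp
    _ < ε * r := by exact mul_lt_mul_of_pos_left hr hε
  have hfr : ∀ (a : ℝ), 0 ≤ (r : ℝ) * Int.fract a ∧ (r : ℝ) * Int.fract a < r := by
    intro a
    constructor
    · exact mul_nonneg hr0.le (Int.fract_nonneg a)
    · nlinarith [Int.fract_lt_one a, Int.fract_nonneg a]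
  have hFlt : ∀ (a : ℝ), (⌊(r : ℝ) * Int.fract a⌋).toNat < r := by
    intro a
    rw [Int.toNat_lt (Int.floor_nonneg.2 (hfr a).1)]
    exact Int.floor_lt.2 (by exact_mod_cast (hfr a).2)
  set F : Fin (r ^ n + 1) → (Fin n → Fin r) := fun j i =>
    ⟨(⌊(r : ℝ) * Int.fract (((j : ℕ) + 1 : ℕ) * v i)⌋).toNat, hFlt _⟩ with hF
  have hcard : Fintype.card (Fin n → Fin r) < Fintype.card (Fin (r ^ n + 1)) := by
    simp
  obtain ⟨a, b, hne, hFeq⟩ := Fintype.exists_ne_map_eq_of_card_lt F hcard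
  have key : ∀ a b : Fin (r ^ n + 1), (a : ℕ) < (b : ℕ) → F a = F b →
      ∃ m : ℕ, 1 ≤ m ∧ ∃ z : Fin n → ℤ, ∀ i, |(m : ℝ) * v i - z i| < ε := by
    intro a b hab hEq
    refine ⟨(b : ℕ) - (a : ℕ), by omega,
      fun i => ⌊(((b : ℕ) + 1 : ℕ)) * v i⌋ - ⌊(((a : ℕ) + 1 : ℕ)) * v i⌋, fun i => ?_⟩
    set A : ℝ := (((a : ℕ) + 1 : ℕ)) * v i with hA
    set B : ℝ := (((b : ℕ) + 1 : ℕ)) * v i with hB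
    have hfloor : ⌊(r : ℝ) * Int.fract B⌋ = ⌊(r : ℝ) * Int.fract A⌋ := by
      have h1 : ((F a i : Fin r) : ℕ) = ((F b i : Fin r) : ℕ) := by rw [hEq]
      simp only [hF] at h1
      rw [← hA, ← hB] at h1
      have h2 := Int.floor_nonneg.2 (hfr A).1
      have h3 := Int.floor_nonneg.2 (hfr B).1
      omega
    have habs : |(r : ℝ) * Int.fract B - (r : ℝ) * Int.fract A| < 1 :=
      Int.abs_sub_lt_one_of_floor_eq_floor hfloor
    have hfrac : |Int.fract B - Int.fract A| < 1 / r := by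
      rw [lt_div_iff₀ hr0]
      calc |Int.fract B - Int.fract A| * r = |(r : ℝ) * Int.fract B - (r : ℝ) * Int.fract A| := by
            rw [← mul_sub, abs_mul, abs_of_nonneg hr0.le]; ring
      _ < 1 := habs
    have hid : ((((b : ℕ) - (a : ℕ) : ℕ)) : ℝ) * v i -
        ((⌊B⌋ - ⌊A⌋ : ℤ) : ℝ) = Int.fract B - Int.fract A := by
      have hcast : ((((b : ℕ) - (a : ℕ) : ℕ)) : ℝ) = ((b : ℕ) : ℝ) - ((a : ℕ) : ℝ) := by
        have : (a : ℕ) ≤ (b : ℕ) := hab.le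
        push_cast [this]; ring
      simp only [Int.fract, hA, hB]
      push_cast [Nat.cast_sub hab.le]
      ring
    rw [hid]
    exact lt_trans hfrac hrε
  rcases hne.lt_or_gt with h | h
  · exact key a b h hFeq
  · exact key b a h hFeq.symm

/-- Dirichlet with arbitrarily large multiplier. -/
lemma dirichlet_large {n : ℕ} (v : Fin n → ℝ) {ε : ℝ} (hε : 0 < ε) (M : ℕ) :
    ∃ m : ℕ, M ≤ m ∧ ∃ z : Fin n → ℤ, ∀ i, |(m : ℝ) * v i - z i| < ε := by
  obtain ⟨m', hm', z, hz⟩ := dirichlet_base (fun i => ((M + 1 : ℕ) : ℝ) * v i) hε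
  refine ⟨m' * (M + 1), ?_, z, fun i => ?_⟩
  · calc M ≤ M + 1 := by omega
    _ = 1 * (M + 1) := by ring
    _ ≤ m' * (M + 1) := Nat.mul_le_mul_right _ hm'
  · have := hz i
    convert this using 3
    push_cast
    ring

/-- Recession direction of an unbounded closed convex set. -/
lemma exists_recession {n : ℕ} {K : Set (Fin n → ℝ)} (hKc : IsClosed K)
    (hKconv : Convex ℝ K) (hKunb : ¬ Bornology.IsBounded K) {x : Fin n → ℝ}
    (hx : x ∈ K) : ∃ v : Fin n → ℝ, ‖v‖ = 1 ∧ ∀ t : ℝ, 0 ≤ t → x + t • v ∈ K := by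
  have hbig : ∀ C : ℝ, ∃ y ∈ K, C < ‖y‖ := by
    intro C
    by_contra h
    push_neg at h
    exact hKunb (isBounded_iff_forall_norm_le.2 ⟨C, h⟩)
  choose y hyK hy using fun k : ℕ => hbig (‖x‖ + k + 1)
  have hd : ∀ k : ℕ, (k : ℝ) + 1 ≤ ‖y k - x‖ := by
    intro k
    calc (k : ℝ) + 1 = (‖x‖ + k + 1) - ‖x‖ := by ring
    _ ≤ ‖y k‖ - ‖x‖ := by linarith [hy k]
    _ ≤ ‖y k - x‖ := by
        have := norm_sub_norm_le (y k) x
        linarith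
  have hd0 : ∀ k : ℕ, 0 < ‖y k - x‖ := fun k => lt_of_lt_of_le (by positivity) (hd k)
  set u : ℕ → (Fin n → ℝ) := fun k => ‖y k - x‖⁻¹ • (y k - x) with hu
  have humem : ∀ k, u k ∈ sphere (0 : Fin n → ℝ) 1 := by
    intro k
    rw [mem_sphere_zero_iff_norm, hu]
    simp [norm_smul, abs_of_pos (inv_pos.2 (hd0 k)), inv_mul_cancel₀ (hd0 k).ne']
  obtain ⟨v, hvmem, φ, hφ, hconv⟩ := (isCompact_sphere (0 : Fin n → ℝ) 1).tendsto_subseq humem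
  refine ⟨v, mem_sphere_zero_iff_norm.1 hvmem, fun t ht => ?_⟩
  have hseg : ∀ k : ℕ, t ≤ ‖y k - x‖ → x + t • u k ∈ K := by
    intro k hk
    have hdk := hd0 k
    have heq : x + t • u k = (1 - t / ‖y k - x‖) • x + (t / ‖y k - x‖) • y k := by
      rw [hu]
      simp only [smul_smul]
      rw [sub_smul, one_smul, smul_sub]
      rw [div_eq_mul_inv]
      module
    rw [heq]
    exact hKconv hx (hyK k)
      (by rw [sub_nonneg, div_le_one hdk]; exact hk)
      (div_nonneg ht hdk.le) (by ring)
  have htend : Tendsto (fun k => x + t • (u ∘ φ) k) atTop (𝓝 (x + t • v)) :=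
    tendsto_const_nhds.add (hconv.const_smul t)
  refine hKc.mem_of_tendsto htend ?_
  filter_upwards [eventually_ge_atTop ⌈t⌉₊] with k hk
  refine hseg (φ k) ?_
  calc t ≤ (⌈t⌉₊ : ℝ) := Nat.le_ceil t
  _ ≤ (φ k : ℝ) := by exact_mod_cast le_trans hk (hφ.le_apply)
  _ ≤ (φ k : ℝ) + 1 := by linarith
  _ ≤ ‖y (φ k) - x‖ := hd (φ k)

/-- Tube around a ray is inside `K`. -/
lemma tube_subset {n : ℕ} {K : Set (Fin n → ℝ)} (hKconv : Convex ℝ K)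
    {x v : Fin n → ℝ} {ε : ℝ}
    (hball : ball x ε ⊆ K) (hray : ∀ t : ℝ, 0 ≤ t → x + t • v ∈ K)
    {t : ℝ} (ht : 0 ≤ t) : ball (x + t • v) ε ⊆ K := by
  intro w hw
  rw [mem_ball, dist_eq_norm, ← sub_sub] at hw
  set c := ‖w - x - t • v‖ with hc
  rcases eq_or_lt_of_le (norm_nonneg (w - x - t • v)) with h0 | hpos
  · have : w = x + t • v := by
      have h := (norm_eq_zero.1 h0.symm)
      have : w - x - t • v = 0 := h
      linear_combination (norm := module) this
    rw [this]; exact hray t ht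
  · have hc0 : 0 < c := hpos
    set ε' : ℝ := (ε + c) / 2 with hε'
    have hcε' : c < ε' := by rw [hε']; linarith
    have hε'ε : ε' < ε := by rw [hε']; linarith
    have hε'0 : 0 < ε' := lt_trans hc0 hcε'
    set lam : ℝ := 1 - c / ε' with hlam
    have hlam0 : 0 < lam := by
      rw [hlam, sub_pos, div_lt_one hε'0]; exact hcε'
    have hlam1 : lam < 1 := by
      rw [hlam]; have : 0 < c / ε' := by positivity
      linarith
    set T : ℝ := t / lam with hT
    have hT0 : 0 ≤ T := div_nonneg ht hlam0.le
    set p : Fin n → ℝ := x + (ε' / c) • (w - x - t • v) with hp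
    have hpmem : p ∈ K := by
      apply hball
      rw [mem_ball, dist_eq_norm]
      have : p - x = (ε' / c) • (w - x - t • v) := by rw [hp]; module
      rw [this, norm_smul, Real.norm_eq_abs, abs_of_pos (by positivity), ← hc]
      rw [div_mul_cancel₀ _ hc0.ne']
      exact hε'ε
    have hqmem : x + T • v ∈ K := hray T hT0
    have hkey : (1 - lam) • p + lam • (x + T • v) = w := by
      have h1 : (1 - lam) * (ε' / c) = 1 := by
        rw [hlam]
        field_simp
        ring
      have h2 : lam * T = t := by
        rw [hT]
        field_simp
      rw [hp]
      have expand : (1 - lam) • (x + (ε' / c) • (w - x - t • v)) + lam • (x + T • v)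
          = x + ((1 - lam) * (ε' / c)) • (w - x - t • v) + (lam * T) • v := by
        module
      rw [expand, h1, h2]
      module
    rw [← hkey]
    exact hKconv hpmem hqmem (by linarith) hlam0.le (by ring)

/-- If `K ⊆ ℝⁿ` is closed, convex, unbounded, with non-empty interior, and the
interior of `K` contains a lattice point, then `int(K) ∩ ℤⁿ` is infinite. -/
theorem interior_lattice_infinite {n : ℕ} (K : Set (Fin n → ℝ))
    (hKc : IsClosed K) (hKconv : Convex ℝ K) (hKunb : ¬ Bornology.IsBounded K)
    (hKint : (interior K).Nonempty)
    (hlat : ∃ x ∈ interior K, ∀ i, ∃ m : ℤ, x i = (m : ℝ)) :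
    {x ∈ interior K | ∀ i, ∃ m : ℤ, x i = (m : ℝ)}.Infinite := by
  obtain ⟨x, hxint, hxlat⟩ := hlat
  obtain ⟨ε, hε0, hball⟩ := isOpen_iff.1 isOpen_interior x hxint
  have hballK : ball x ε ⊆ K := hball.trans interior_subset
  obtain ⟨v, hv1, hray⟩ := exists_recession hKc hKconv hKunb (interior_subset hxint)
  intro hfin
  obtain ⟨R, hR⟩ := isBounded_iff_forall_norm_le.1 hfin.isBounded
  obtain ⟨M, hM⟩ := exists_nat_gt (R + ‖x‖ + ε + 1)
  obtain ⟨m, hmM, z, hz⟩ := dirichlet_large v hε0 M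
  set zr : Fin n → ℝ := fun i => (z i : ℝ) with hzr
  have hzclose : ‖(m : ℝ) • v - zr‖ < ε := by
    rw [pi_norm_lt_iff hε0]
    intro i
    simpa [hzr, Real.norm_eq_abs] using hz i
  have hpmem : x + zr ∈ ball (x + (m : ℝ) • v) ε := by
    rw [mem_ball, dist_eq_norm]
    have : x + zr - (x + (m : ℝ) • v) = -((m : ℝ) • v - zr) := by module
    rw [this, norm_neg]
    exact hzclose
  have hpint : x + zr ∈ interior K :=
    interior_maximal
      (tube_subset hKconv hballK hray (by positivity : (0:ℝ) ≤ (m : ℝ))) isOpen_ball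
      hpmem
  have hpS : x + zr ∈ {x | x ∈ interior K ∧ ∀ i : Fin n, ∃ q : ℤ, x i = (q : ℝ)} := by
    refine ⟨hpint, fun i => ?_⟩
    obtain ⟨q, hq⟩ := hxlat i
    exact ⟨q + z i, by simp [hzr, hq]⟩
  have hnorm : R < ‖x + zr‖ := by
    have h1 : (m : ℝ) ≤ ‖(m : ℝ) • v‖ := by
      rw [norm_smul, Real.norm_eq_abs, hv1, mul_one, Nat.abs_cast]
    have h2 : ‖(m : ℝ) • v‖ - ‖zr‖ ≤ ‖(m : ℝ) • v - zr‖ := norm_sub_norm_le _ _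
    have h3 : ‖zr‖ - ‖x + zr‖ ≤ ‖x‖ := by
      have h4 : ‖zr‖ - ‖x + zr‖ ≤ ‖zr - (x + zr)‖ := norm_sub_norm_le _ _
      have h5 : zr - (x + zr) = -x := by module
      rw [h5, norm_neg] at h4
      exact h4
    have hMm : (M : ℝ) ≤ (m : ℝ) := by exact_mod_cast hmM
    linarith
  exact absurd (hR _ hpS) (not_le.2 hnorm)
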